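/- Let n ≥ 3, let f be continuous on (z−δ, z)∪(z, z+δ) with one-sided limits f(z⁻) = f_L ≠ f_R = f(z⁺), and suppose f(z) ∈ {f_L, f_R}. Let x_{i,h} = z + a_i h with a₀ < ⋯ < a_n, and suppose a_{i₀} ≤ 0 < a_{i₀+1} (appropriately for the value of f(z)) so that the stencil straddles z for all small h. Let Δ_n(f₀,…,f_n) := B² − 4AC be the discriminant of the (n−2)-th derivative of the rescaled interpolating polynomial of the data (f₀,…,f_n). Then Δ_n(f(x_{0,h}),…,f(x_{n,h})) = Ō(1), i.e., as h → 0⁺ it is bounded and bounded away from 0. -/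

import Mathlib

open Polynomial Filter Topology Set


lemma poly_rolle (P : ℝ[X]) {x y : ℝ} (hxy : x < y) (h : P.eval x = P.eval y) :
    ∃ r ∈ Set.Ioo x y, (derivative P).eval r = 0 := by
  obtain ⟨r, hr, hr'⟩ := exists_deriv_eq_zero hxy (P.continuousOn) h
  exact ⟨r, hr, by rwa [Polynomial.deriv] at hr'⟩

lemma rolle_finset (P : ℝ[X]) (m : ℕ) (s : Finset ℝ) (hcard : s.card = m + 1)
    (hroots : ∀ x ∈ s, P.eval x = 0) :
    ∃ t : Finset ℝ, t.card = m ∧ ∀ y ∈ t, (derivative P).eval y = 0 := by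
  classical
  let e := s.orderIsoOfFin hcard
  have hlt : ∀ i : Fin m, ((e i.castSucc : ℝ)) < (e i.succ : ℝ) := by
    intro i
    exact_mod_cast e.strictMono (Fin.castSucc_lt_succ : i.castSucc < i.succ)
  have hEx : ∀ i : Fin m, ∃ r, r ∈ Set.Ioo (e i.castSucc : ℝ) (e i.succ : ℝ) ∧
      (derivative P).eval r = 0 := by
    intro i
    obtain ⟨r, hr1, hr2⟩ := poly_rolle P (hlt i)
      (by rw [hroots _ (e i.castSucc).2, hroots _ (e i.succ).2])
    exact ⟨r, hr1, hr2⟩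
  choose g hg1 hg2 using hEx
  have hmono : StrictMono g := by
    intro i j hij
    have h1 : (e i.succ : ℝ) ≤ (e j.castSucc : ℝ) := by
      have : i.succ ≤ j.castSucc := by
        rw [Fin.le_def]
        simp only [Fin.val_succ, Fin.coe_castSucc]
        exact hij
      exact_mod_cast e.monotone this
    exact lt_of_lt_of_le (hg1 i).2 (le_trans h1 (hg1 j).1.le)
  refine ⟨Finset.image g Finset.univ, ?_, ?_⟩
  · rw [Finset.card_image_of_injective _ hmono.injective, Finset.card_univ, Fintype.card_fin]
  · intro y hy
    obtain ⟨i, _, rfl⟩ := Finset.mem_image.1 hy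
    exact hg2 i

lemma card_le_natDegree_of_roots {Q : ℝ[X]} (hQ : Q ≠ 0) (t : Finset ℝ)
    (ht : ∀ x ∈ t, Q.eval x = 0) : t.card ≤ Q.natDegree := by
  apply Polynomial.card_le_degree_of_subset_roots
  intro x hx
  rw [Finset.mem_val] at hx
  exact (Polynomial.mem_roots hQ).2 (ht x hx)

lemma myIterDerivInv (P : ℝ[X]) (hP : P ≠ 0)
    (s : Finset ℝ) (hcard : s.card = P.natDegree) (hroots : ∀ x ∈ s, P.eval x = 0) :
    ∀ j, j ≤ P.natDegree →
      ((⇑derivative)^[j] P).natDegree = P.natDegree - j ∧ ((⇑derivative)^[j] P) ≠ 0 ∧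
      ∃ t : Finset ℝ, t.card = P.natDegree - j ∧ ∀ x ∈ t, ((⇑derivative)^[j] P).eval x = 0 := by
  intro j
  induction j with
  | zero => intro _; exact ⟨by simp, by simpa using hP, s, by simpa using hcard, by simpa using hroots⟩
  | succ k ih =>
    intro hk1
    obtain ⟨hdeg, hne, t, htc, htr⟩ := ih (by omega)
    generalize hQdef : (⇑derivative)^[k] P = Q at hdeg hne htr
    have hQd : Q.natDegree = P.natDegree - k := hdeg
    have hQd1 : Q.natDegree ≠ 0 := by omega
    have hiter : (⇑derivative)^[k+1] P = derivative Q := by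
      rw [Function.iterate_succ_apply', hQdef]
    -- roots of derivative
    have htc' : t.card = (P.natDegree - (k+1)) + 1 := by rw [htc]; omega
    obtain ⟨t', ht'c, ht'r⟩ := rolle_finset Q (P.natDegree - (k+1)) t htc' htr
    have hQ'ne : derivative Q ≠ 0 := by
      intro h0
      exact hQd1 (Polynomial.natDegree_eq_zero_of_derivative_eq_zero h0)
    have hle : (derivative Q).natDegree ≤ P.natDegree - (k+1) := by
      have := Polynomial.natDegree_derivative_lt hQd1
      omega
    have hge : P.natDegree - (k+1) ≤ (derivative Q).natDegree := by
      rw [← ht'c]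
      exact card_le_natDegree_of_roots hQ'ne t' ht'r
    refine ⟨?_, ?_, ?_⟩
    · rw [hiter]; omega
    · rw [hiter]; exact hQ'ne
    · exact ⟨t', ht'c, by rw [hiter]; exact ht'r⟩

lemma quad_disc (Q : ℝ[X]) (hdeg : Q.natDegree = 2) {r1 r2 : ℝ} (h12 : r1 ≠ r2)
    (h1 : Q.eval r1 = 0) (h2 : Q.eval r2 = 0) :
    0 < Q.coeff 1 ^ 2 - 4 * Q.coeff 2 * Q.coeff 0 := by
  have hQne : Q ≠ 0 := fun h => by simp [h] at hdeg
  have hA : Q.coeff 2 ≠ 0 := by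
    rw [← hdeg]
    exact Polynomial.leadingCoeff_ne_zero.2 hQne
  have heval : ∀ r : ℝ, Q.eval r = Q.coeff 0 + Q.coeff 1 * r + Q.coeff 2 * r ^ 2 := by
    intro r
    rw [Polynomial.eval_eq_sum_range, hdeg]
    simp [Finset.sum_range_succ]
  set A := Q.coeff 2
  set B := Q.coeff 1
  set C := Q.coeff 0
  have e1 : C + B * r1 + A * r1 ^ 2 = 0 := by rw [← heval]; exact h1
  have e2 : C + B * r2 + A * r2 ^ 2 = 0 := by rw [← heval]; exact h2
  have hsub : (r1 - r2) * (B + A * (r1 + r2)) = 0 := by linear_combination e1 - e2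
  have hB : B = -A * (r1 + r2) := by
    rcases mul_eq_zero.1 hsub with h | h
    · exact absurd (sub_eq_zero.1 h) h12
    · linarith
  have hC : C = A * r1 * r2 := by
    rw [hB] at e1; nlinarith [e1]
  have : B ^ 2 - 4 * A * C = (A * (r1 - r2)) ^ 2 := by rw [hB, hC]; ring
  rw [this]
  exact pow_pos (abs_pos.2 (mul_ne_zero hA (sub_ne_zero.2 h12))) 2 |>.trans_eq (by rw [sq_abs]) |>.trans_le le_rfl


/-- At a jump discontinuity straddled by the stencil, the discriminant `Δ_n` of the
`(n-2)`-th derivative of the rescaled interpolation polynomial is `Ō(1)` as `h → 0⁺`: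
bounded and bounded away from zero. -/
theorem discriminant_at_jump_barO_one
    (n : ℕ) (hn : 3 ≤ n) (z : ℝ) (a : Fin (n + 1) → ℝ) (ha : StrictMono a)
    (f : ℝ → ℝ) (δ : ℝ) (hδ : 0 < δ)
    (hfc : ContinuousOn f ((Set.Ioo (z - δ) (z + δ)) \ {z}))
    (fL fR : ℝ) (hjump : fL ≠ fR)
    (hL : Tendsto f (𝓝[<] z) (𝓝 fL)) (hR : Tendsto f (𝓝[>] z) (𝓝 fR))
    (i₀ : Fin n)
    (hstraddle : (f z = fL ∧ a i₀.castSucc ≤ 0 ∧ 0 < a i₀.succ) ∨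
                 (f z = fR ∧ a i₀.castSucc < 0 ∧ 0 ≤ a i₀.succ))
    (p : ℝ → Polynomial ℝ)
    (hdeg : ∀ h : ℝ, 0 < h → (p h).natDegree ≤ n)
    (hinterp : ∀ h : ℝ, 0 < h → ∀ i : Fin (n + 1),
      (p h).eval (z + a i * h) = f (z + a i * h))
    (D : ℝ → ℝ)
    (hD : ∀ h, D h =
      (Polynomial.derivative^[n - 2]
        ((p h).comp (Polynomial.C z + Polynomial.C h * Polynomial.X))).coeff 1 ^ 2 -
      4 * (Polynomial.derivative^[n - 2]
        ((p h).comp (Polynomial.C z + Polynomial.C h * Polynomial.X))).coeff 2 *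
        (Polynomial.derivative^[n - 2]
        ((p h).comp (Polynomial.C z + Polynomial.C h * Polynomial.X))).coeff 0) :
    ∃ c C h₀ : ℝ, 0 < c ∧ 0 < h₀ ∧ ∀ h : ℝ, 0 < h → h < h₀ →
      c ≤ |D h| ∧ |D h| ≤ C := by
  classical
  have hainj : Set.InjOn a (Finset.univ : Finset (Fin (n+1))) := ha.injective.injOn
  set step : Fin (n+1) → ℝ := fun i => if (i : ℕ) ≤ (i₀ : ℕ) then fL else fR with hstepdef
  set P : ℝ[X] := Lagrange.interpolate Finset.univ a step with hPdef
  have hcardu : (Finset.univ : Finset (Fin (n+1))).card = n + 1 := by simp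
  have hPdeg : P.natDegree ≤ n := by
    by_cases h0 : P = 0
    · simp [h0]
    · have h1 := Lagrange.degree_interpolate_lt step hainj
      rw [← hPdef, hcardu] at h1
      have h2 : P.natDegree < n + 1 :=
        (Polynomial.natDegree_lt_iff_degree_lt h0).2 (by exact_mod_cast h1)
      omega
  have hPeval : ∀ i, P.eval (a i) = step i := fun i =>
    Lagrange.eval_interpolate_at_node step hainj (Finset.mem_univ i)
  have hv1 : P.eval (a i₀.castSucc) = fL := by
    rw [hPeval]; simp [hstepdef]
  have hv2 : P.eval (a i₀.succ) = fR := by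
    rw [hPeval]; simp [hstepdef]
  have hP'ne : derivative P ≠ 0 := by
    intro h0
    have h1 := Polynomial.natDegree_eq_zero_of_derivative_eq_zero h0
    obtain ⟨c, hc⟩ := Polynomial.natDegree_eq_zero.1 h1
    apply hjump
    rw [← hv1, ← hv2, ← hc]; simp
  -- roots of derivative P
  have hroot : ∀ j : Fin n, ∃ r, j ≠ i₀ →
      r ∈ Set.Ioo (a j.castSucc) (a j.succ) ∧ (derivative P).eval r = 0 := by
    intro j
    by_cases hj : j = i₀
    · exact ⟨0, fun h => absurd hj h⟩
    · have hjj : (j : ℕ) ≠ (i₀ : ℕ) := fun h => hj (Fin.ext h)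
      have heq : step j.castSucc = step j.succ := by
        simp only [hstepdef, Fin.coe_castSucc, Fin.val_succ]
        by_cases hlt : (j : ℕ) < (i₀ : ℕ)
        · rw [if_pos (by omega), if_pos (by omega)]
        · rw [if_neg (by omega), if_neg (by omega)]
      obtain ⟨r, hr1, hr2⟩ := poly_rolle P (ha (Fin.castSucc_lt_succ : j.castSucc < j.succ))
        (by rw [hPeval, hPeval, heq])
      exact ⟨r, fun _ => ⟨hr1, hr2⟩⟩
  choose g hg using hroot
  have hginj : Set.InjOn g (Finset.univ.erase i₀) := by
    intro x hx y hy hxy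
    simp only [Finset.coe_erase, Set.mem_diff, Set.mem_singleton_iff] at hx hy
    have hx' : x ≠ i₀ := by simpa using hx.2
    have hy' : y ≠ i₀ := by simpa using hy.2
    by_contra hne
    have key : ∀ u v : Fin n, u ≠ i₀ → v ≠ i₀ → u < v → g u < g v := by
      intro u v hu hv huv
      have h1 : g u < a u.succ := (hg u hu).1.2
      have h2 : a v.castSucc < g v := (hg v hv).1.1
      have h3 : a u.succ ≤ a v.castSucc := by
        apply ha.monotone
        rw [Fin.le_def]
        simp only [Fin.val_succ, Fin.coe_castSucc]
        exact huv
      linarith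
    rcases lt_trichotomy x y with h | h | h
    · exact absurd hxy (ne_of_lt (key x y hx' hy' h))
    · exact hne h
    · exact absurd hxy.symm (ne_of_lt (key y x hy' hx' h))
  set s : Finset ℝ := (Finset.univ.erase i₀).image g with hsdef
  have hscard : s.card = n - 1 := by
    rw [hsdef, Finset.card_image_of_injOn hginj, Finset.card_erase_of_mem (Finset.mem_univ _)]
    simp
  have hsroots : ∀ x ∈ s, (derivative P).eval x = 0 := by
    intro x hx
    obtain ⟨j, hj, rfl⟩ := Finset.mem_image.1 hx
    have hj' : j ≠ i₀ := (Finset.mem_erase.1 hj).1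
    exact (hg j hj').2
  have hP'deg : (derivative P).natDegree = n - 1 := by
    have h1 : (derivative P).natDegree ≤ n - 1 :=
      le_trans (Polynomial.natDegree_derivative_le P) (by omega)
    have h2 : n - 1 ≤ (derivative P).natDegree := by
      rw [← hscard]; exact card_le_natDegree_of_roots hP'ne s hsroots
    omega
  -- iterate
  obtain ⟨hQdeg, hQne, t, htc, htr⟩ := myIterDerivInv (derivative P) hP'ne s
    (hscard.trans hP'deg.symm) hsroots (n - 3) (by omega)
  have hQeq : (⇑derivative)^[n-2] P = (⇑derivative)^[n-3] (derivative P) := by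
    have hn2 : n - 2 = (n - 3) + 1 := by omega
    rw [hn2, Function.iterate_succ_apply]
  have hQ2 : ((⇑derivative)^[n-2] P).natDegree = 2 := by
    rw [hQeq, hQdeg, hP'deg]; omega
  have htc2 : t.card = 2 := by rw [htc, hP'deg]; omega
  obtain ⟨r1, r2, hr12, hts⟩ := Finset.card_eq_two.1 htc2
  have hQr1 : ((⇑derivative)^[n-2] P).eval r1 = 0 := by
    rw [hQeq]; exact htr r1 (by rw [hts]; simp)
  have hQr2 : ((⇑derivative)^[n-2] P).eval r2 = 0 := by
    rw [hQeq]; exact htr r2 (by rw [hts]; simp)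
  have hDiscPos : 0 < ((⇑derivative)^[n-2] P).coeff 1 ^ 2 -
      4 * ((⇑derivative)^[n-2] P).coeff 2 * ((⇑derivative)^[n-2] P).coeff 0 :=
    quad_disc _ hQ2 hr12 hQr1 hQr2
  -- continuous discriminant functional
  set Lk : ℕ → ((Fin (n+1) → ℝ) →ₗ[ℝ] ℝ) := fun k =>
    (Polynomial.lcoeff ℝ k).comp
      (((derivative : ℝ[X] →ₗ[ℝ] ℝ[X]) ^ (n-2)).comp (Lagrange.interpolate Finset.univ a))
    with hLkdef
  have hLk : ∀ k v, Lk k v = ((⇑derivative)^[n-2] (Lagrange.interpolate Finset.univ a v)).coeff k := by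
    intro k v
    rw [hLkdef]
    simp only [LinearMap.coe_comp, Function.comp_apply, Polynomial.lcoeff_apply,
      Module.End.pow_apply]
  set Δf : (Fin (n+1) → ℝ) → ℝ := fun v => (Lk 1 v) ^ 2 - 4 * (Lk 2 v) * (Lk 0 v) with hΔfdef
  have hΔcont : Continuous Δf := by
    have hC : ∀ k, Continuous (Lk k) := fun k => (Lk k).continuous_of_finiteDimensional
    exact ((hC 1).pow 2).sub ((continuous_const.mul (hC 2)).mul (hC 0))
  have hΔstep : Δf step = ((⇑derivative)^[n-2] P).coeff 1 ^ 2 -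
      4 * ((⇑derivative)^[n-2] P).coeff 2 * ((⇑derivative)^[n-2] P).coeff 0 := by
    rw [hΔfdef]; simp only [hLk, ← hPdef]
  -- data tends to step
  have hneg : ∀ c : ℝ, c < 0 → Tendsto (fun h : ℝ => f (z + c * h)) (𝓝[>] (0:ℝ)) (𝓝 fL) := by
    intro c hc
    apply hL.comp
    apply tendsto_nhdsWithin_of_tendsto_nhds_of_eventually_within
    · have h1 : Tendsto (fun h : ℝ => z + c * h) (𝓝 (0:ℝ)) (𝓝 (z + c * 0)) :=
        (continuous_const.add (continuous_const.mul continuous_id)).tendsto 0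
      simpa using h1.mono_left nhdsWithin_le_nhds
    · filter_upwards [self_mem_nhdsWithin] with h hh
      have : c * h < 0 := mul_neg_of_neg_of_pos hc hh
      simp only [Set.mem_Iio]; linarith
  have hpos : ∀ c : ℝ, 0 < c → Tendsto (fun h : ℝ => f (z + c * h)) (𝓝[>] (0:ℝ)) (𝓝 fR) := by
    intro c hc
    apply hR.comp
    apply tendsto_nhdsWithin_of_tendsto_nhds_of_eventually_within
    · have h1 : Tendsto (fun h : ℝ => z + c * h) (𝓝 (0:ℝ)) (𝓝 (z + c * 0)) :=
        (continuous_const.add (continuous_const.mul continuous_id)).tendsto 0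
      simpa using h1.mono_left nhdsWithin_le_nhds
    · filter_upwards [self_mem_nhdsWithin] with h hh
      have : 0 < c * h := mul_pos hc hh
      simp only [Set.mem_Ioi]; linarith
  have hdata : Tendsto (fun h : ℝ => fun i => f (z + a i * h)) (𝓝[>] (0:ℝ)) (𝓝 step) := by
    rw [tendsto_pi_nhds]
    intro i
    rcases hstraddle with ⟨hfz, hC0, hS0⟩ | ⟨hfz, hC0, hS0⟩
    · by_cases hi : (i : ℕ) ≤ (i₀ : ℕ)
      · have hstepi : step i = fL := by simp [hstepdef, hi]
        rw [hstepi]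
        have hai : a i ≤ 0 := le_trans (ha.monotone (show i ≤ i₀.castSucc by
          rw [Fin.le_def]; simpa using hi)) hC0
        rcases lt_or_eq_of_le hai with h0 | h0
        · exact hneg _ h0
        · have heq : (fun h : ℝ => f (z + a i * h)) = fun _ => f z := by
            funext h; rw [h0]; ring_nf
          rw [heq, hfz]; exact tendsto_const_nhds
      · have hstepi : step i = fR := by simp [hstepdef, hi]
        rw [hstepi]
        have hai : 0 < a i := lt_of_lt_of_le hS0 (ha.monotone (show i₀.succ ≤ i by
          rw [Fin.le_def]; simp only [Fin.val_succ]; omega))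
        exact hpos _ hai
    · by_cases hi : (i : ℕ) ≤ (i₀ : ℕ)
      · have hstepi : step i = fL := by simp [hstepdef, hi]
        rw [hstepi]
        have hai : a i < 0 := lt_of_le_of_lt (ha.monotone (show i ≤ i₀.castSucc by
          rw [Fin.le_def]; simpa using hi)) hC0
        exact hneg _ hai
      · have hstepi : step i = fR := by simp [hstepdef, hi]
        rw [hstepi]
        have hai : 0 ≤ a i := le_trans hS0 (ha.monotone (show i₀.succ ≤ i by
          rw [Fin.le_def]; simp only [Fin.val_succ]; omega))
        rcases lt_or_eq_of_le hai with h0 | h0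
        · exact hpos _ h0
        · have heq : (fun h : ℝ => f (z + a i * h)) = fun _ => f z := by
            funext h; rw [← h0]; ring_nf
          rw [heq, hfz]; exact tendsto_const_nhds
  -- identify D with Δf ∘ data on (0, ∞)
  have hDeq : ∀ᶠ h in 𝓝[>] (0:ℝ), D h = Δf (fun i => f (z + a i * h)) := by
    filter_upwards [self_mem_nhdsWithin] with h hh
    have hh : (0:ℝ) < h := hh
    have hcomp : (p h).comp (Polynomial.C z + Polynomial.C h * Polynomial.X)
        = Lagrange.interpolate Finset.univ a (fun i => f (z + a i * h)) := by
      apply Lagrange.eq_interpolate_of_eval_eq _ hainj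
      · have h2 : (Polynomial.C z + Polynomial.C h * Polynomial.X).natDegree ≤ 1 := by
          refine le_trans (Polynomial.natDegree_add_le _ _) ?_
          simp only [Polynomial.natDegree_C, max_le_iff]
          exact ⟨by omega, le_trans (Polynomial.natDegree_mul_le) (by simp)⟩
        have h1 : ((p h).comp (Polynomial.C z + Polynomial.C h * Polynomial.X)).natDegree ≤ n := by
          refine le_trans Polynomial.natDegree_comp_le ?_
          calc (p h).natDegree * (Polynomial.C z + Polynomial.C h * Polynomial.X).natDegree
              ≤ n * 1 := Nat.mul_le_mul (hdeg h hh) h2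
            _ = n := by ring
        have h3 : ((p h).comp (Polynomial.C z + Polynomial.C h * Polynomial.X)).degree
            < ((n + 1 : ℕ) : WithBot ℕ) := by
          refine lt_of_le_of_lt (Polynomial.degree_le_natDegree) ?_
          exact_mod_cast Nat.lt_succ_of_le h1
        rw [hcardu]
        exact_mod_cast h3
      · intro i _
        rw [Polynomial.eval_comp]
        simp only [Polynomial.eval_add, Polynomial.eval_C, Polynomial.eval_mul, Polynomial.eval_X]
        rw [show z + (h * a i) = z + a i * h by ring]
        exact hinterp h hh i
    rw [hD h, hcomp, hΔfdef]
    simp only [hLk]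
  have htend : Tendsto D (𝓝[>] (0:ℝ)) (𝓝 (Δf step)) := by
    have h1 : Tendsto (fun h : ℝ => Δf (fun i => f (z + a i * h))) (𝓝[>] (0:ℝ)) (𝓝 (Δf step)) :=
      (hΔcont.tendsto step).comp hdata
    exact Tendsto.congr' (hDeq.mono fun h e => e.symm) h1
  set Δs := Δf step with hΔsdef
  clear_value Δs
  have hΔpos : 0 < Δs := by rw [hΔstep]; exact hDiscPos
  have hball : ∀ᶠ h in 𝓝[>] (0:ℝ), dist (D h) Δs < Δs / 2 :=
    Metric.tendsto_nhds.1 htend (Δs / 2) (by positivity)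
  obtain ⟨ε, hε, hsub⟩ := Metric.mem_nhdsWithin_iff.1 (Filter.eventually_iff.1 hball)
  refine ⟨Δs / 2, 2 * Δs, ε, by positivity, hε, ?_⟩
  intro h h1 h2
  have hmem : h ∈ Metric.ball (0:ℝ) ε ∩ Set.Ioi 0 := by
    constructor
    · rw [Metric.mem_ball, Real.dist_eq, sub_zero, abs_of_pos h1]; exact h2
    · exact h1
  have hdist : |D h - Δs| < Δs / 2 := by
    have := hsub hmem
    rwa [Set.mem_setOf_eq, Real.dist_eq] at this
  obtain ⟨hd1, hd2⟩ := abs_sub_lt_iff.1 hdist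
  have hDpos : 0 < D h := by linarith
  rw [abs_of_pos hDpos]
  constructor <;> linarith
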